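/- In the hypercube Q_n, the vertex v = 00...0 has functionality at least (n−1)/3: if v is a function of a set S of vertices of Q_n \ {v}, then |S| ≥ (n−1)/3. -/

import Mathlib

open scoped Classical

/-- The Boolean adjacency indicator of a graph. -/
noncomputable def adjB {V : Type*} (G : SimpleGraph V) (x z : V) : Bool :=
  if G.Adj x z then true else false

/-- A vertex `y` is a function of the set `S` of vertices: there is a Boolean
function `f` of the variables indexed by `S` such that the adjacency of `y`
to any vertex `z` outside `{y} ∪ S` equals `f` applied to the adjacencies
of the members of `S` to `z`. -/
def FunctionOf {V : Type*} (G : SimpleGraph V) (y : V) (S : Finset V) : Prop :=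
  y ∉ S ∧ ∃ f : (S → Bool) → Bool, ∀ z, z ≠ y → z ∉ S →
    (G.Adj y z ↔ f (fun s => adjB G s.1 z) = true)

/-- `fun(y) ≤ k` : the functionality of vertex `y` is at most `k`. -/
def VertexFunLE {V : Type*} (G : SimpleGraph V) (y : V) (k : ℕ) : Prop :=
  ∃ S : Finset V, S.card ≤ k ∧ FunctionOf G y S


/-- The hypercube `Q n`: vertices are binary sequences of length `n`, adjacent iff
their Hamming distance is 1. -/
def hypercube (n : ℕ) : SimpleGraph (Fin n → Bool) where
  Adj u v := hammingDist u v = 1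
  symm := by
    constructor
    intro u v h
    rwa [hammingDist_comm]
  loopless := by
    constructor
    intro u h
    simp [hammingDist_self] at h

/-- In the hypercube `Q n`, the all-zeros vertex has functionality at least
`(n-1)/3`: if it is a function of a set `S` of other vertices, then `n - 1 ≤ 3|S|`. -/
noncomputable def supp {n : ℕ} (s : Fin n → Bool) : Finset (Fin n) :=
  Finset.univ.filter (fun k => s k = true)

lemma ham_eq {n : ℕ} (x y : Fin n → Bool) :
    hammingDist x y = (symmDiff (supp x) (supp y)).card := by
  unfold hammingDist
  congr 1
  ext k
  simp [Finset.mem_symmDiff, supp]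
  cases hx : x k <;> cases hy : y k <;> simp

lemma ham_lb {n : ℕ} (x y : Fin n → Bool) :
    (supp x).card - (supp y).card ≤ hammingDist x y := by
  rw [ham_eq]
  calc (supp x).card - (supp y).card ≤ (supp x \ supp y).card := Finset.le_card_sdiff _ _
  _ ≤ _ := Finset.card_le_card (by intro k hk; simp [Finset.mem_symmDiff] at *; tauto)

lemma ham_disj {n : ℕ} (x y : Fin n → Bool) (h : Disjoint (supp x) (supp y)) :
    hammingDist x y = (supp x).card + (supp y).card := by
  rw [ham_eq, h.symmDiff_eq_sup]
  exact Finset.card_union_of_disjoint h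

lemma supp_eq_empty {n : ℕ} (x : Fin n → Bool) (h : supp x = ∅) :
    x = fun _ => false := by
  funext k
  by_contra hk
  have : k ∈ supp x := by simp [supp]; revert hk; cases x k <;> simp
  simp [h] at this

theorem stmt19 (n : ℕ) (S : Finset (Fin n → Bool))
    (hS : FunctionOf (hypercube n) (fun _ => false) S) :
    n - 1 ≤ 3 * S.card := by
  obtain ⟨h0, f, hf⟩ := hS
  set v : Fin n → Bool := fun _ => false with hv
  have hsuppv : supp v = ∅ := by simp [supp, hv]
  set S3 := S.filter (fun s => (supp s).card ≤ 3) with hS3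
  set T := S3.biUnion supp with hT
  have hTcard : T.card ≤ 3 * S.card := by
    calc T.card ≤ ∑ s ∈ S3, (supp s).card := Finset.card_biUnion_le
    _ ≤ ∑ s ∈ S3, 3 := Finset.sum_le_sum (fun s hs => (Finset.mem_filter.mp hs).2)
    _ = 3 * S3.card := by rw [Finset.sum_const]; ring
    _ ≤ 3 * S.card := by
        have : S3.card ≤ S.card := Finset.card_le_card (hS3 ▸ Finset.filter_subset _ _)
        omega
  have hcompl : Tᶜ.card ≤ 1 := by
    by_contra hc
    push_neg at hc
    obtain ⟨i, hi, j, hj, hij⟩ := Finset.one_lt_card.mp hc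
    rw [Finset.mem_compl] at hi hj
    -- the two test vertices
    set z1 : Fin n → Bool := fun k => decide (k = i) with hz1
    set z2 : Fin n → Bool := fun k => decide (k = i ∨ k = j) with hz2
    have hsupp1 : supp z1 = {i} := by ext k; simp [supp, hz1]
    have hsupp2 : supp z2 = {i, j} := by ext k; simp [supp, hz2]
    -- generic: for z with supp z ⊆ {i,j} nonempty, no s ∈ S is adjacent to z
    have key : ∀ z : Fin n → Bool, supp z ⊆ {i, j} → (supp z).Nonempty →
        ∀ s ∈ S, ¬ (hypercube n).Adj s z := by
      intro z hzsub hzne s hs hadj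
      have hadj' : hammingDist s z = 1 := hadj
      have hzcard : (supp z).card ≤ 2 := le_trans (Finset.card_le_card hzsub)
        ((Finset.card_insert_le _ _).trans (by simp))
      have hs0 : 1 ≤ (supp s).card := by
        rcases Finset.eq_empty_or_nonempty (supp s) with h | h
        · rw [supp_eq_empty s h] at hs; exact absurd hs h0
        · exact Finset.card_pos.mpr h
      by_cases hw : (supp s).card ≤ 3
      · -- s ∈ S3, so supp s ⊆ T, disjoint from {i,j}
        have hsub : supp s ⊆ T := by
          intro k hk
          exact Finset.mem_biUnion.mpr ⟨s, Finset.mem_filter.mpr ⟨hs, hw⟩, hk⟩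
        have hdisj : Disjoint (supp s) (supp z) := by
          rw [Finset.disjoint_left]
          intro k hk hk'
          rcases Finset.mem_insert.mp (hzsub hk') with rfl | hkj
          · exact hi (hsub hk)
          · rw [Finset.mem_singleton] at hkj; subst hkj; exact hj (hsub hk)
        rw [ham_disj s z hdisj] at hadj'
        have := Finset.card_pos.mpr hzne
        omega
      · have := ham_lb s z
        omega
    have hne1 : z1 ≠ v := by
      intro h; have := congrFun h i; simp [hz1, hv] at this
    have hne2 : z2 ≠ v := by
      intro h; have := congrFun h i; simp [hz2, hv] at this
    have hni1 : z1 ∉ S := by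
      intro h
      have : supp z1 ⊆ T := fun k hk =>
        Finset.mem_biUnion.mpr ⟨z1, Finset.mem_filter.mpr ⟨h, by rw [hsupp1]; simp⟩, hk⟩
      exact hi (this (by rw [hsupp1]; simp))
    have hni2 : z2 ∉ S := by
      intro h
      have hc2 : (supp z2).card ≤ 3 := by
        rw [hsupp2]
        exact (Finset.card_insert_le _ _).trans (by simp)
      have : supp z2 ⊆ T := fun k hk =>
        Finset.mem_biUnion.mpr ⟨z2, Finset.mem_filter.mpr ⟨h, hc2⟩, hk⟩
      exact hi (this (by rw [hsupp2]; simp))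
    have ha1 : (hypercube n).Adj v z1 := by
      show hammingDist v z1 = 1
      rw [ham_eq, hsuppv, hsupp1]
      simp [symmDiff]
    have ha2 : ¬ (hypercube n).Adj v z2 := by
      show ¬ hammingDist v z2 = 1
      rw [ham_eq, hsuppv, hsupp2]
      have : ({i, j} : Finset (Fin n)).card = 2 := Finset.card_pair hij
      simp [symmDiff, this]
    have hfun : (fun s : S => adjB (hypercube n) s.1 z1) =
        (fun s : S => adjB (hypercube n) s.1 z2) := by
      funext s
      have k1 := key z1 (by rw [hsupp1]; intro k hk; simp at hk; simp [hk]) (by rw [hsupp1]; simp) s.1 s.2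
      have k2 := key z2 (by rw [hsupp2]) (by rw [hsupp2]; exact ⟨i, by simp⟩) s.1 s.2
      simp [adjB, k1, k2]
    have e1 := (hf z1 hne1 hni1).mp ha1
    rw [hfun] at e1
    exact ha2 ((hf z2 hne2 hni2).mpr e1)
  have hcc : Tᶜ.card = n - T.card := by rw [Finset.card_compl]; simp
  have hTn : T.card ≤ n := by
    have := Finset.card_le_univ T
    simpa using this
  omega
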